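/- Let Q(z, \bar z) be a real-valued polynomial in one complex variable z of the form Q = Σ_{j,k>0, j+k ≤ 2m} a_{jk} z^j \bar z^k (no harmonic terms) which is subharmonic on ℂ and homogeneous of degree 2m. If Q is not identically zero, then Q(z,\bar z) ≥ 0 cannot fail on all of ℂ ∖ {0}; indeed the coefficient of |z|^{2m} satisfies a_{mm} ≥ 0, and if Q(z) = c|z|^{2m} then c > 0 whenever Q is subharmonic and nonzero. -/

import Mathlib

open Complex intervalIntegral

lemma aux_exp_int (n : ℤ) (hn : n ≠ 0) :
    ∫ θ in (0:ℝ)..(2*Real.pi), Complex.exp ((n:ℂ) * Complex.I * θ) = 0 := by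
  have hc : (n:ℂ) * Complex.I ≠ 0 := by
    simp [Complex.I_ne_zero, hn]
  rw [integral_exp_mul_complex hc]
  have : Complex.exp ((n:ℂ) * Complex.I * (2*Real.pi)) = 1 := by
    rw [show ((n:ℂ) * Complex.I * (2*Real.pi)) = (n:ℤ) * (2 * Real.pi * Complex.I) by ring]
    exact Complex.exp_int_mul_two_pi_mul_I n
  simp [this]


/-- Let `Q(z) = ∑_{j+k=2m, j,k>0} a_{jk} z^j \bar z^k` be a real-valued
homogeneous subharmonic polynomial of degree `2m` without harmonic terms (subharmonicity
expressed by the circle sub-mean value inequality).  If `Q` is not identically zero then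
`Q ≥ 0` at some nonzero point, the coefficient `a_{mm}` of `|z|^{2m}` is real with
`a_{mm} ≥ 0`, and if moreover `Q(z) = c|z|^{2m}` then `c > 0`. -/
theorem stmt4 (m : ℕ) (hm : 0 < m) (a : ℕ → ℕ → ℂ)
    (hsym : ∀ j k, a k j = starRingEnd ℂ (a j k))
    (Q : ℂ → ℝ)
    (hQ : ∀ z : ℂ, (Q z : ℂ) =
      ∑ j ∈ Finset.Ioo 0 (2 * m), a j (2 * m - j) * z ^ j * (starRingEnd ℂ z) ^ (2 * m - j))
    -- subharmonicity: circle sub-mean value inequality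
    (hsub : ∀ z₀ : ℂ, ∀ r : ℝ, 0 < r →
      Q z₀ ≤ (1 / (2 * Real.pi)) *
        ∫ θ in (0:ℝ)..(2 * Real.pi), Q (z₀ + r * Complex.exp (θ * Complex.I)))
    (hne : ∃ z, Q z ≠ 0) :
    (∃ z : ℂ, z ≠ 0 ∧ 0 ≤ Q z) ∧
    (0 ≤ (a m m).re ∧ (a m m).im = 0) ∧
    (∀ c : ℝ, (∀ z, Q z = c * ‖z‖ ^ (2 * m)) → 0 < c) := by
  have him : (a m m).im = 0 := by
    have h := hsym m m
    have := congrArg Complex.im h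
    simp [Complex.conj_im] at this
    linarith
  -- Q is continuous
  have hQre : ∀ z, Q z = (∑ j ∈ Finset.Ioo 0 (2 * m),
      a j (2 * m - j) * z ^ j * (starRingEnd ℂ z) ^ (2 * m - j)).re := by
    intro z; rw [← hQ z, Complex.ofReal_re]
  have hQcont : Continuous Q := by
    have : Continuous fun z : ℂ => (∑ j ∈ Finset.Ioo 0 (2 * m),
        a j (2 * m - j) * z ^ j * (starRingEnd ℂ z) ^ (2 * m - j)).re :=
      Complex.continuous_re.comp (continuous_finset_sum _ fun j _ =>
        ((continuous_const.mul (continuous_pow j)).mul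
          (continuous_conj.pow (2 * m - j))))
    exact this.congr fun z => (hQre z).symm
  -- Q 0 = 0
  have hQ0 : Q 0 = 0 := by
    have := hQ 0
    rw [Finset.sum_eq_zero (fun j hj => by
      rw [Finset.mem_Ioo] at hj
      rw [zero_pow hj.1.ne', mul_zero, zero_mul])] at this
    exact_mod_cast this
  -- key integral identity
  have key : ∀ r : ℝ, 0 < r →
      (∫ θ in (0:ℝ)..(2 * Real.pi), Q ((r:ℂ) * Complex.exp (θ * Complex.I)))
        = 2 * Real.pi * (a m m).re * r ^ (2 * m) := by
    intro r hr
    have hterm : ∀ j ∈ Finset.Ioo 0 (2 * m), ∀ θ : ℝ,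
        a j (2 * m - j) * ((r:ℂ) * Complex.exp (θ * Complex.I)) ^ j *
          (starRingEnd ℂ ((r:ℂ) * Complex.exp (θ * Complex.I))) ^ (2 * m - j)
        = a j (2 * m - j) * (r:ℂ) ^ (2 * m) *
            Complex.exp ((((2:ℤ) * j - 2 * m : ℤ) : ℂ) * Complex.I * θ) := by
      intro j hj θ
      rw [Finset.mem_Ioo] at hj
      have hconj : starRingEnd ℂ ((r:ℂ) * Complex.exp (θ * Complex.I))
          = (r:ℂ) * Complex.exp (-(θ * Complex.I)) := by
        rw [map_mul, Complex.conj_ofReal, ← Complex.exp_conj]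
        congr 1
        simp [Complex.conj_I]
      rw [hconj, mul_pow, mul_pow, ← Complex.exp_nat_mul, ← Complex.exp_nat_mul]
      have hr2 : (r:ℂ) ^ j * (r:ℂ) ^ (2 * m - j) = (r:ℂ) ^ (2 * m) := by
        rw [← pow_add]; congr 1; omega
      have hcast : ((2 * m - j : ℕ) : ℂ) = 2 * (m:ℂ) - j := by
        have : (2 * m - j : ℕ) = 2 * m - j := rfl
        push_cast [Nat.cast_sub (le_of_lt hj.2)]
        ring
      calc a j (2 * m - j) * ((r:ℂ) ^ j * Complex.exp ((j:ℂ) * (θ * Complex.I))) *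
              ((r:ℂ) ^ (2 * m - j) * Complex.exp (((2 * m - j : ℕ):ℂ) * (-(θ * Complex.I))))
          = a j (2 * m - j) * ((r:ℂ) ^ j * (r:ℂ) ^ (2 * m - j)) *
              (Complex.exp ((j:ℂ) * (θ * Complex.I)) *
               Complex.exp (((2 * m - j : ℕ):ℂ) * (-(θ * Complex.I)))) := by ring
        _ = a j (2 * m - j) * (r:ℂ) ^ (2 * m) *
              Complex.exp ((((2:ℤ) * j - 2 * m : ℤ) : ℂ) * Complex.I * θ) := by
            rw [hr2, ← Complex.exp_add]
            congr 2
            rw [hcast]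
            push_cast
            ring
    -- integral as complex
    have hint : (∫ θ in (0:ℝ)..(2 * Real.pi),
          ((Q ((r:ℂ) * Complex.exp (θ * Complex.I)) : ℂ)))
        = 2 * Real.pi * a m m * (r:ℂ) ^ (2 * m) := by
      have : ∀ θ : ℝ, ((Q ((r:ℂ) * Complex.exp (θ * Complex.I)) : ℂ))
          = ∑ j ∈ Finset.Ioo 0 (2 * m), a j (2 * m - j) * (r:ℂ) ^ (2 * m) *
              Complex.exp ((((2:ℤ) * j - 2 * m : ℤ) : ℂ) * Complex.I * θ) := by
        intro θ
        rw [hQ]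
        exact Finset.sum_congr rfl fun j hj => hterm j hj θ
      rw [intervalIntegral.integral_congr (fun θ _ => this θ),
        intervalIntegral.integral_finset_sum (fun j hj => by
          apply Continuous.intervalIntegrable; fun_prop)]
      have : ∀ j ∈ Finset.Ioo 0 (2 * m),
          (∫ θ in (0:ℝ)..(2 * Real.pi), a j (2 * m - j) * (r:ℂ) ^ (2 * m) *
            Complex.exp ((((2:ℤ) * j - 2 * m : ℤ) : ℂ) * Complex.I * θ))
          = if j = m then 2 * Real.pi * a m m * (r:ℂ) ^ (2 * m) else 0 := by
        intro j hj
        rw [intervalIntegral.integral_const_mul]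
        by_cases hjm : j = m
        · rw [hjm, if_pos rfl]
          have h0 : ((((2:ℤ) * m - 2 * m : ℤ)) : ℂ) = 0 := by push_cast; ring
          have h1 : (2 * m - m : ℕ) = m := by omega
          rw [h0, h1]
          simp only [zero_mul, Complex.exp_zero, intervalIntegral.integral_const,
            sub_zero, Complex.real_smul, smul_eq_mul, mul_one]
          push_cast; ring
        · rw [Finset.mem_Ioo] at hj
          have hn : ((2:ℤ) * j - 2 * m : ℤ) ≠ 0 := by omega
          rw [aux_exp_int _ hn]
          simp [hjm]
      rw [Finset.sum_congr rfl this, Finset.sum_ite_eq' _ m,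
        if_pos (by rw [Finset.mem_Ioo]; omega)]
    have hrw : (2 * (Real.pi:ℂ) * a m m * (r:ℂ) ^ (2 * m))
        = ((2 * Real.pi * r ^ (2 * m) : ℝ) : ℂ) * a m m := by
      push_cast; ring
    rw [hrw] at hint
    have h2 : (((∫ θ in (0:ℝ)..(2 * Real.pi),
          Q ((r:ℂ) * Complex.exp (θ * Complex.I)) : ℝ)) : ℂ)
        = ((2 * Real.pi * r ^ (2 * m) : ℝ) : ℂ) * a m m := by
      rw [← intervalIntegral.integral_ofReal]
      exact hint
    have h3 := congrArg Complex.re h2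
    rw [Complex.ofReal_re, Complex.re_ofReal_mul] at h3
    rw [h3]; ring
  -- average inequality at 0
  have hge : (0:ℝ) ≤ (a m m).re := by
    have h := hsub 0 1 one_pos
    rw [hQ0] at h
    have heq := key 1 one_pos
    simp only [Complex.ofReal_one, zero_add] at h heq
    rw [heq] at h
    have hπ : 0 < Real.pi := Real.pi_pos
    have h1 : 1 / (2 * Real.pi) * (2 * Real.pi * (a m m).re * 1 ^ (2 * m))
        = (a m m).re := by field_simp; simp
    linarith [h1 ▸ h]
  -- part 1
  have hpart1 : ∃ z : ℂ, z ≠ 0 ∧ 0 ≤ Q z := by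
    by_contra hcon
    push_neg at hcon
    have hneg : ∀ θ : ℝ, Q ((1:ℂ) * Complex.exp (θ * Complex.I)) < 0 := by
      intro θ
      exact hcon _ (by simp [Complex.exp_ne_zero])
    have hineg : (0:ℝ) < ∫ θ in (0:ℝ)..(2 * Real.pi),
        -(Q ((1:ℂ) * Complex.exp (θ * Complex.I))) := by
      apply intervalIntegral.intervalIntegral_pos_of_pos_on
      · apply Continuous.intervalIntegrable
        exact (hQcont.comp (by fun_prop :
          Continuous fun θ : ℝ => (1:ℂ) * Complex.exp (θ * Complex.I))).neg
      · intro x _; linarith [hneg x]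
      · positivity
    rw [intervalIntegral.integral_neg] at hineg
    have heq := key 1 one_pos
    simp only [Complex.ofReal_one] at heq
    rw [heq] at hineg
    simp only [one_pow] at hineg
    have hπ : 0 < Real.pi := Real.pi_pos
    nlinarith
  refine ⟨hpart1, ⟨hge, him⟩, ?_⟩
  intro c hc
  obtain ⟨z, hz0, hzQ⟩ := hpart1
  obtain ⟨w, hw⟩ := hne
  have hwne : c ≠ 0 := by
    intro h; apply hw; rw [hc w, h]; ring
  have hzabs : (0:ℝ) < ‖z‖ ^ (2 * m) :=
    pow_pos (norm_pos_iff.mpr hz0) _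
  rw [hc z] at hzQ
  rcases lt_or_eq_of_le (le_of_not_gt fun h : c < 0 => by nlinarith) with h | h
  · exact h
  · exact absurd h.symm hwne
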